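/- Define g₄ : [0,1] → ℝ by g₄(z) = (−z² + 10z − 3 + √(25−z)·(1−z)^{3/2}) / (2(z+2)). Then g₄ takes values in [0,1], and for every z ∈ [0,1] it satisfies the functional equation g₄(z) = (1 + z·g₄(g₄(z))) / 2. -/
import Mathlib


namespace VEP

/-- The generating function `g₄` for the complete binary tree model with natural embedding:
`g₄(z) = (−z² + 10z − 3 + √(25−z)(1−z)^{3/2}) / (2(z+2))`. -/
noncomputable def g4 (z : ℝ) : ℝ :=
  (-z ^ 2 + 10 * z - 3 + Real.sqrt (25 - z) * (1 - z) ^ ((3 : ℝ) / 2)) / (2 * (z + 2))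

lemma g4_eq (z : ℝ) (h1 : z ≤ 1) :
    g4 z = (-z ^ 2 + 10 * z - 3 + (1 - z) * Real.sqrt ((25 - z) * (1 - z))) / (2 * (z + 2)) := by
  have hz1 : (0:ℝ) ≤ 1 - z := by linarith
  have hz25 : (0:ℝ) ≤ 25 - z := by linarith
  have key : (1 - z) ^ ((1:ℝ)/2) = Real.sqrt (1 - z) := (Real.sqrt_eq_rpow _).symm
  rw [g4, show (3:ℝ)/2 = 1 + 1/2 by norm_num, Real.rpow_add' hz1 (by norm_num),
    Real.rpow_one, key, Real.sqrt_mul hz25]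
  ring

lemma g4_bounds (z : ℝ) (h0 : 0 ≤ z) (h1 : z ≤ 1) : z ≤ g4 z ∧ g4 z ≤ 1 := by
  have hu0 : 0 ≤ Real.sqrt ((25 - z) * (1 - z)) := Real.sqrt_nonneg _
  have hu2 : Real.sqrt ((25 - z) * (1 - z)) ^ 2 = (25 - z) * (1 - z) :=
    Real.sq_sqrt (by nlinarith)
  set u := Real.sqrt ((25 - z) * (1 - z)) with hu
  have hul : 3 * (1 - z) ≤ u := by nlinarith [sq_nonneg (u + 3 * (1 - z))]
  have huu : u ≤ 7 - z := by nlinarith [sq_nonneg (u - (7 - z)), sq_nonneg (u + (7 - z))]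
  rw [g4_eq z h1]
  constructor
  · rw [le_div_iff₀ (by linarith)]
    nlinarith [mul_nonneg (by linarith : (0:ℝ) ≤ 1 - z) (by linarith : (0:ℝ) ≤ u - 3 * (1 - z))]
  · rw [div_le_one (by linarith)]
    nlinarith [mul_nonneg (by linarith : (0:ℝ) ≤ 1 - z) (by linarith : (0:ℝ) ≤ 7 - z - u)]

/-- `g₄` maps `[0,1]` into `[0,1]` and satisfies `g₄(z) = (1 + z·g₄(g₄(z))) / 2` there. -/
theorem g4_functional_equation :
    (∀ z ∈ Set.Icc (0 : ℝ) 1, g4 z ∈ Set.Icc (0 : ℝ) 1) ∧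
    (∀ z ∈ Set.Icc (0 : ℝ) 1, g4 z = (1 + z * g4 (g4 z)) / 2) := by
  constructor
  · rintro z ⟨h0, h1⟩
    obtain ⟨hb1, hb2⟩ := g4_bounds z h0 h1
    exact ⟨le_trans h0 hb1, hb2⟩
  · rintro z ⟨h0, h1⟩
    have hu0 : 0 ≤ Real.sqrt ((25 - z) * (1 - z)) := Real.sqrt_nonneg _
    have hu2 : Real.sqrt ((25 - z) * (1 - z)) ^ 2 = (25 - z) * (1 - z) :=
      Real.sq_sqrt (by nlinarith)
    set u := Real.sqrt ((25 - z) * (1 - z)) with hu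
    have hul : 3 * (1 - z) ≤ u := by nlinarith [sq_nonneg (u + 3 * (1 - z))]
    obtain ⟨hb1, hb2⟩ := g4_bounds z h0 h1
    set w := g4 z with hwdef
    have hw0 : 0 ≤ w := le_trans h0 hb1
    have hw1 : w ≤ 1 := hb2
    have hD : (2 * (z + 2)) ≠ 0 := by positivity
    have hDw : (2 * (w + 2)) ≠ 0 := by positivity
    have hwD : w * (2 * (z + 2)) = -z ^ 2 + 10 * z - 3 + (1 - z) * u := by
      rw [hwdef, g4_eq z h1, div_mul_cancel₀ _ hD]
    -- the square root at the point w
    have e : (25 - w) * (1 - w) * (2 * (z + 2)) ^ 2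
        = ((z - 1) * (z + 11) + (z + 5) * u) ^ 2 := by
      linear_combination (w * (2 * (z + 2)) + (-z ^ 2 + 10 * z - 3 + (1 - z) * u)
        - 26 * (2 * (z + 2))) * hwD + (-12 * (z + 2)) * hu2
    have hSnn : 0 ≤ ((z - 1) * (z + 11) + (z + 5) * u) := by
      nlinarith [mul_nonneg (show (0:ℝ) ≤ z + 5 by linarith)
          (show (0:ℝ) ≤ u - 3 * (1 - z) by linarith),
        mul_nonneg (show (0:ℝ) ≤ 2 * z + 4 by linarith) (show (0:ℝ) ≤ 1 - z by linarith)]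
    have hv : Real.sqrt ((25 - w) * (1 - w))
        = ((z - 1) * (z + 11) + (z + 5) * u) / (2 * (z + 2)) := by
      have h2 : (25 - w) * (1 - w)
          = (((z - 1) * (z + 11) + (z + 5) * u) / (2 * (z + 2))) ^ 2 := by
        rw [div_pow, eq_div_iff (by positivity)]
        linear_combination e
      rw [h2, Real.sqrt_sq (by positivity)]
    have hgD : g4 w * (2 * (w + 2))
        = -w ^ 2 + 10 * w - 3 + (1 - w) * Real.sqrt ((25 - w) * (1 - w)) := by
      rw [g4_eq w hw1, div_mul_cancel₀ _ hDw]
    have hgD2 : g4 w * (2 * (w + 2)) * (2 * (z + 2))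
        = (-w ^ 2 + 10 * w - 3) * (2 * (z + 2))
          + (1 - w) * ((z - 1) * (z + 11) + (z + 5) * u) := by
      rw [hgD, hv]
      field_simp
    have key : (2 * w - 1 - z * g4 w) * (2 * (w + 2) * (2 * (z + 2)) ^ 2) = 0 := by
      linear_combination (-(z * (2 * (z + 2)))) * hgD2
        + ((4 + z) * (w * (2 * (z + 2)) + (-z ^ 2 + 10 * z - 3 + (1 - z) * u))
            + 6 * (2 * (z + 2)) - 10 * z * (2 * (z + 2))
            + z * ((z - 1) * (z + 11) + (z + 5) * u)) * hwD
        + (4 - 2 * z - 2 * z ^ 2) * hu2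
    have hfac : (2 * (w + 2) * (2 * (z + 2)) ^ 2) ≠ 0 := by positivity
    have hzero : 2 * w - 1 - z * g4 w = 0 := by
      rcases mul_eq_zero.mp key with h | h
      · exact h
      · exact absurd h hfac
    linarith

end VEP
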